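/- Let γ > 1, κ > 0, ρ̄ > 0, ū ∈ ℝ and c̄ = √(κγρ̄^{γ−1}). Let θ₂ be the piecewise rarefaction/shock function of model M2 through (ρ̄, ρ̄ū), define q(σ) = ūσ + θ₂(σ) and the velocity u(σ) = q(σ)/σ. Then the total enthalpy along the 2-Lax curve of model M2, h(σ) = (κγ/(γ−1))·σ^{γ−1} + u(σ)²/2, is differentiable at σ = ρ̄ with h'(ρ̄) = (ū + c̄)·c̄/ρ̄. -/

import Mathlib

open Set Filter Topology


/-- The total enthalpy along the 2-Lax curve of the isentropic
model M2 is differentiable at σ = ρ̄ with derivative (ū + c̄)c̄/ρ̄. -/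
theorem enthalpy_deriv_along_lax2_M2
    (γ κ ρbar ubar cbar : ℝ) (hγ : 1 < γ) (hκ : 0 < κ) (hρbar : 0 < ρbar)
    (hc : cbar = Real.sqrt (κ * γ * ρbar ^ (γ - 1)))
    (θ₂ : ℝ → ℝ)
    (hθ : ∀ σ : ℝ, θ₂ σ =
      if σ ≤ ρbar then
        (2 * Real.sqrt (κ * γ) / (γ - 1)) * σ * (σ ^ ((γ - 1) / 2) - ρbar ^ ((γ - 1) / 2))
      else Real.sqrt ((σ / ρbar) * (σ - ρbar) * (κ * σ ^ γ - κ * ρbar ^ γ)))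
    (q u : ℝ → ℝ)
    (hq : ∀ σ : ℝ, q σ = ubar * σ + θ₂ σ)
    (hu : ∀ σ : ℝ, u σ = q σ / σ) :
    HasDerivAt (fun σ => (κ * γ / (γ - 1)) * σ ^ (γ - 1) + (u σ) ^ 2 / 2)
      ((ubar + cbar) * cbar / ρbar) ρbar := by
  have hγ1 : (0:ℝ) < γ - 1 := by linarith
  have hκγ : (0:ℝ) < κ * γ := by positivity
  have hρne : ρbar ≠ 0 := hρbar.ne'
  have hcsq : cbar ^ 2 = κ * γ * ρbar ^ (γ - 1) := by
    rw [hc, Real.sq_sqrt]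
    positivity
  have hθρ : θ₂ ρbar = 0 := by
    rw [hθ, if_pos le_rfl]; ring
  have hrr : ρbar * ρbar ^ ((γ - 1) / 2 - 1) = ρbar ^ ((γ - 1) / 2) := by
    nth_rewrite 1 [← Real.rpow_one ρbar]
    rw [← Real.rpow_add hρbar]
    congr 1; ring
  have hhalf : ρbar ^ ((γ - 1) / 2) = Real.sqrt (ρbar ^ (γ - 1)) := by
    rw [Real.sqrt_eq_rpow, ← Real.rpow_mul hρbar.le]
    congr 1; ring
  -- Left branch derivative
  have hpow : HasDerivAt (fun x : ℝ => x ^ ((γ - 1) / 2))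
      (((γ - 1) / 2) * ρbar ^ ((γ - 1) / 2 - 1)) ρbar :=
    Real.hasDerivAt_rpow_const (Or.inl hρne)
  have hg : HasDerivAt (fun σ : ℝ =>
      (2 * Real.sqrt (κ * γ) / (γ - 1)) * σ * (σ ^ ((γ - 1) / 2) - ρbar ^ ((γ - 1) / 2)))
      cbar ρbar := by
    have h1 : HasDerivAt (fun σ : ℝ =>
        σ * (σ ^ ((γ - 1) / 2) - ρbar ^ ((γ - 1) / 2)))
        (1 * (ρbar ^ ((γ - 1) / 2) - ρbar ^ ((γ - 1) / 2)) +
          ρbar * (((γ - 1) / 2) * ρbar ^ ((γ - 1) / 2 - 1))) ρbar :=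
      (hasDerivAt_id ρbar).mul (hpow.sub_const _)
    have h2 := h1.const_mul (2 * Real.sqrt (κ * γ) / (γ - 1))
    have hfun : (fun σ : ℝ =>
        (2 * Real.sqrt (κ * γ) / (γ - 1)) * σ * (σ ^ ((γ - 1) / 2) - ρbar ^ ((γ - 1) / 2))) =
        (fun y : ℝ => 2 * Real.sqrt (κ * γ) / (γ - 1) * (y * (y ^ ((γ - 1) / 2) - ρbar ^ ((γ - 1) / 2)))) := by
      funext σ; ring
    rw [hfun]
    refine h2.congr_deriv (Eq.symm ?_)
    · have e : (1:ℝ) * (ρbar ^ ((γ - 1) / 2) - ρbar ^ ((γ - 1) / 2)) +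
          ρbar * (((γ - 1) / 2) * ρbar ^ ((γ - 1) / 2 - 1)) =
          ((γ - 1) / 2) * ρbar ^ ((γ - 1) / 2) := by
        rw [← hrr]; ring
      have hcc : cbar = Real.sqrt (κ * γ) * Real.sqrt (ρbar ^ (γ - 1)) := by
        rw [hc, ← Real.sqrt_mul hκγ.le]
      rw [e, hhalf, hcc]
      field_simp
  have hleft : HasDerivWithinAt θ₂ cbar (Iic ρbar) ρbar := by
    refine hg.hasDerivWithinAt.congr (fun σ hσ => ?_) ?_
    · rw [hθ σ, if_pos (mem_Iic.mp hσ)]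
    · rw [hθ, if_pos le_rfl]
  -- Right branch via slope
  have hK : HasDerivAt (fun x : ℝ => κ * x ^ γ) (κ * (γ * ρbar ^ (γ - 1))) ρbar :=
    (Real.hasDerivAt_rpow_const (Or.inl hρne)).const_mul κ
  have hslopeK : Tendsto (slope (fun x : ℝ => κ * x ^ γ) ρbar) (𝓝[>] ρbar)
      (𝓝 (κ * (γ * ρbar ^ (γ - 1)))) :=
    (hasDerivAt_iff_tendsto_slope.mp hK).mono_left
      (nhdsWithin_mono _ (fun x hx => ne_of_gt hx))
  have hdiv : Tendsto (fun σ : ℝ => σ / ρbar) (𝓝[>] ρbar) (𝓝 1) := by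
    have h : Tendsto (fun σ : ℝ => σ / ρbar) (𝓝 ρbar) (𝓝 (ρbar / ρbar)) :=
      (continuous_id.div_const ρbar).tendsto ρbar
    rw [div_self hρne] at h
    exact h.mono_left nhdsWithin_le_nhds
  have hinner : Tendsto (fun σ : ℝ => (σ / ρbar) * slope (fun x : ℝ => κ * x ^ γ) ρbar σ)
      (𝓝[>] ρbar) (𝓝 (κ * γ * ρbar ^ (γ - 1))) := by
    have h := hdiv.mul hslopeK
    rw [one_mul] at h
    convert h using 2
    ring
  have hsq : Tendsto (fun σ : ℝ =>
      Real.sqrt ((σ / ρbar) * slope (fun x : ℝ => κ * x ^ γ) ρbar σ))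
      (𝓝[>] ρbar) (𝓝 cbar) := by
    rw [hc]
    exact (Real.continuous_sqrt.continuousAt.tendsto).comp hinner
  have hright : HasDerivWithinAt θ₂ cbar (Ici ρbar) ρbar := by
    rw [hasDerivWithinAt_iff_tendsto_slope, Ici_sdiff_left]
    refine hsq.congr' ?_
    filter_upwards [self_mem_nhdsWithin] with σ (hσ : ρbar < σ)
    have ht : (0:ℝ) < σ - ρbar := by linarith
    have key : (σ / ρbar) * (σ - ρbar) * (κ * σ ^ γ - κ * ρbar ^ γ) =
        ((σ / ρbar) * ((κ * σ ^ γ - κ * ρbar ^ γ) / (σ - ρbar))) * (σ - ρbar) ^ 2 := by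
      field_simp
    have e1 : slope (fun x : ℝ => κ * x ^ γ) ρbar σ
        = (κ * σ ^ γ - κ * ρbar ^ γ) / (σ - ρbar) := by
      rw [slope_def_field]
    have e2 : slope θ₂ ρbar σ = θ₂ σ / (σ - ρbar) := by
      rw [slope_def_field, hθρ, sub_zero]
    rw [e1, e2, hθ σ, if_neg (not_le.mpr hσ), key,
      Real.sqrt_mul' _ (sq_nonneg (σ - ρbar)), Real.sqrt_sq ht.le,
      mul_div_assoc, div_self ht.ne', mul_one]
  have hθd : HasDerivAt θ₂ cbar ρbar := by
    have h := hleft.union hright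
    rwa [Iic_union_Ici, hasDerivWithinAt_univ] at h
  -- q and u
  have hq' : HasDerivAt q (ubar + cbar) ρbar := by
    have h : HasDerivAt (fun σ : ℝ => ubar * σ + θ₂ σ) (ubar * 1 + cbar) ρbar :=
      ((hasDerivAt_id ρbar).const_mul ubar).add hθd
    rw [funext hq]
    simpa using h
  have hqρ : q ρbar = ubar * ρbar := by rw [hq, hθρ, add_zero]
  have huv : HasDerivAt u (cbar / ρbar) ρbar := by
    have h : HasDerivAt (fun σ : ℝ => q σ / σ)
        (((ubar + cbar) * ρbar - q ρbar * 1) / ρbar ^ 2) ρbar :=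
      hq'.div (hasDerivAt_id ρbar) hρne
    rw [funext hu]
    convert h using 1
    rw [hqρ]
    field_simp
    ring
  have huρ : u ρbar = ubar := by rw [hu, hqρ, mul_div_assoc, div_self hρne, mul_one]
  -- Assemble
  have h1 : HasDerivAt (fun σ : ℝ => (κ * γ / (γ - 1)) * σ ^ (γ - 1))
      ((κ * γ / (γ - 1)) * ((γ - 1) * ρbar ^ (γ - 1 - 1))) ρbar :=
    (Real.hasDerivAt_rpow_const (Or.inl hρne)).const_mul _
  have h2 : HasDerivAt (fun σ => (u σ) ^ 2 / 2)
      ((2 * u ρbar ^ 1 * (cbar / ρbar)) / 2) ρbar := (huv.pow 2).div_const 2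
  have hfin := h1.add h2
  refine hfin.congr_deriv (Eq.symm ?_)
  rw [huρ]
  have hrr2 : ρbar ^ (γ - 1 - 1) = ρbar ^ (γ - 1) / ρbar := by
    rw [Real.rpow_sub hρbar, Real.rpow_one]
  rw [hrr2]
  field_simp
  linear_combination hcsq
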